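/- Under the stated assumptions, ∫ (Q(s, π₊(s)) − Q(s, π(s))) dν(s) ≥ ΔQ − C·L_P·L_Q·(3·c∞² + 3·c∞·√(c∞² + Δ∞) + Δ∞). (This is the measure-theoretic core of Proposition 2: the single-step lower bound before multiplying by 1/(1−γ) and before invoking the performance-difference identity.) -/

import Mathlib

open MeasureTheory Real

lemma jordan_key {α : Type*} [MeasurableSpace α] (μ ν : Measure α)
    [IsFiniteMeasure μ] [IsFiniteMeasure ν] :
    ν + (ν.toSignedMeasure - μ.toSignedMeasure).toJordanDecomposition.negPart
      = μ + (ν.toSignedMeasure - μ.toSignedMeasure).toJordanDecomposition.posPart := by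
  set ξ := ν.toSignedMeasure - μ.toSignedMeasure with hξ
  have h := ξ.toSignedMeasure_toJordanDecomposition
  ext A hA
  have h1 : ξ.toJordanDecomposition.toSignedMeasure A = ξ A := by rw [h]
  rw [JordanDecomposition.toSignedMeasure] at h1
  rw [VectorMeasure.sub_apply, Measure.toSignedMeasure_apply_measurable hA,
    Measure.toSignedMeasure_apply_measurable hA] at h1
  have h2 : ξ A = (ν A).toReal - (μ A).toReal := by
    rw [hξ, VectorMeasure.sub_apply, Measure.toSignedMeasure_apply_measurable hA,
      Measure.toSignedMeasure_apply_measurable hA]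
    rfl
  simp only [Measure.add_apply]
  have fν : ν A ≠ ⊤ := measure_ne_top _ _
  have fμ : μ A ≠ ⊤ := measure_ne_top _ _
  have fp : ξ.toJordanDecomposition.posPart A ≠ ⊤ := measure_ne_top _ _
  have fn : ξ.toJordanDecomposition.negPart A ≠ ⊤ := measure_ne_top _ _
  rw [← ENNReal.toReal_eq_toReal_iff' (by finiteness) (by finiteness),
    ENNReal.toReal_add fν fn, ENNReal.toReal_add fμ fp]
  rw [h2] at h1
  simp only [Measure.real] at h1
  linarith


/-- Measure-theoretic core of Proposition 2: the single-step lower bound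
`∫ (Q(s,π₊(s)) − Q(s,π(s))) dν ≥ ΔQ − C·L_P·L_Q·(3·c∞² + 3·c∞·√(c∞² + Δ∞) + Δ∞)`. -/
theorem stmt_8
    {S : Type*} [MeasurableSpace S]
    {H : Type*} [NormedAddCommGroup H] [NormedSpace ℝ H]
    [MeasurableSpace H] [BorelSpace H]
    (μ ν : Measure S) [IsProbabilityMeasure μ] [IsProbabilityMeasure ν]
    (πp πt πβ : S → H)
    (hπp : Measurable πp) (hπ : Measurable πt) (hπβ : Measurable πβ)
    (L_Q : ℝ) (hL_Q : 0 < L_Q)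
    (Q : S → H → ℝ)
    (hLip : ∀ s a₁ a₂, |Q s a₁ - Q s a₂| ≤ L_Q * ‖a₁ - a₂‖)
    (M : ℝ) (hbdd : ∀ s, |Q s (πp s) - Q s (πt s)| ≤ M)
    (hmeas : Measurable (fun s => Q s (πp s) - Q s (πt s)))
    (hintμ : Integrable (fun s => Q s (πp s) - Q s (πt s)) μ)
    (hintν : Integrable (fun s => Q s (πp s) - Q s (πt s)) ν)
    (ΔQ : ℝ) (hΔQ : ΔQ = ∫ s, (Q s (πp s) - Q s (πt s)) ∂μ)
    (cinf Δinf : ℝ) (hcinf : 0 ≤ cinf) (hΔinf : 0 ≤ Δinf)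
    (hc : ∀ s, ‖πt s - πβ s‖ ≤ cinf)
    (hΔ : ∀ s, |‖πp s - πβ s‖ ^ 2 - ‖πt s - πβ s‖ ^ 2| ≤ Δinf)
    (C L_P : ℝ) (hC : 0 < C) (hL_P : 0 < L_P)
    (hsupfin : BddAbove (Set.range fun s => ‖πp s - πβ s‖))
    (hTV : ((ν.toSignedMeasure - μ.toSignedMeasure).totalVariation Set.univ).toReal
      ≤ C * L_P * ⨆ s, ‖πp s - πβ s‖) :
    (∫ s, (Q s (πp s) - Q s (πt s)) ∂ν) ≥
      ΔQ - C * L_P * L_Q *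
        (3 * cinf ^ 2 + 3 * cinf * Real.sqrt (cinf ^ 2 + Δinf) + Δinf) := by
  set f : S → ℝ := fun s => Q s (πp s) - Q s (πt s) with hf
  set B₀ : ℝ := Real.sqrt (cinf ^ 2 + Δinf) with hB₀
  have hB₀nn : 0 ≤ B₀ := Real.sqrt_nonneg _
  have hB₀sq : B₀ ^ 2 = cinf ^ 2 + Δinf := Real.sq_sqrt (by positivity)
  -- pointwise bound on ‖πp s - πβ s‖
  have hpβ : ∀ s, ‖πp s - πβ s‖ ≤ B₀ := by
    intro s
    have h1 : ‖πp s - πβ s‖ ^ 2 ≤ cinf ^ 2 + Δinf := by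
      have h2 := abs_le.mp (hΔ s)
      have h3 : ‖πt s - πβ s‖ ^ 2 ≤ cinf ^ 2 := by
        have := hc s
        nlinarith [norm_nonneg (πt s - πβ s)]
      linarith
    nlinarith [norm_nonneg (πp s - πβ s), hB₀sq, hB₀nn]
  -- pointwise bound on f
  have hfb : ∀ s, |f s| ≤ L_Q * (B₀ + cinf) := by
    intro s
    calc |f s| ≤ L_Q * ‖πp s - πt s‖ := hLip s _ _
      _ ≤ L_Q * (B₀ + cinf) := by
          have : ‖πp s - πt s‖ ≤ ‖πp s - πβ s‖ + ‖πt s - πβ s‖ := by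
            have h4 := norm_sub_le_norm_sub_add_norm_sub (πp s) (πβ s) (πt s)
            rw [norm_sub_rev (πβ s) (πt s)] at h4
            exact h4
          nlinarith [hpβ s, hc s]
  set ξ := ν.toSignedMeasure - μ.toSignedMeasure with hξ
  set p := ξ.toJordanDecomposition.posPart with hp
  set n := ξ.toJordanDecomposition.negPart with hn
  have hkey : ν + n = μ + p := jordan_key μ ν
  -- integrability of f wrt p and n
  have hintp : Integrable f p :=
    ⟨hmeas.aestronglyMeasurable, HasFiniteIntegral.of_bounded
      (C := L_Q * (B₀ + cinf)) (Filter.Eventually.of_forall fun s => by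
        simpa [Real.norm_eq_abs] using hfb s)⟩
  have hintn : Integrable f n :=
    ⟨hmeas.aestronglyMeasurable, HasFiniteIntegral.of_bounded
      (C := L_Q * (B₀ + cinf)) (Filter.Eventually.of_forall fun s => by
        simpa [Real.norm_eq_abs] using hfb s)⟩
  have hsum : ∫ s, f s ∂ν + ∫ s, f s ∂n = ∫ s, f s ∂μ + ∫ s, f s ∂p := by
    rw [← integral_add_measure hintν hintn, ← integral_add_measure hintμ hintp, hkey]
  -- bounds on the correction integrals
  have htvr : ((ξ.totalVariation) Set.univ).toReal = (p Set.univ).toReal + (n Set.univ).toReal := by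
    rw [SignedMeasure.totalVariation, Measure.add_apply,
      ENNReal.toReal_add (measure_ne_top _ _) (measure_ne_top _ _)]
  have hIp : |∫ s, f s ∂p| ≤ L_Q * (B₀ + cinf) * (p Set.univ).toReal := by
    simpa [Real.norm_eq_abs, Measure.real] using
      norm_integral_le_of_norm_le_const (μ := p) (f := f)
        (Filter.Eventually.of_forall fun s => by simpa [Real.norm_eq_abs] using hfb s)
  have hIn : |∫ s, f s ∂n| ≤ L_Q * (B₀ + cinf) * (n Set.univ).toReal := by
    simpa [Real.norm_eq_abs, Measure.real] using
      norm_integral_le_of_norm_le_const (μ := n) (f := f)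
        (Filter.Eventually.of_forall fun s => by simpa [Real.norm_eq_abs] using hfb s)
  -- bound the total variation
  have hS : Nonempty S := by
    by_contra h
    rw [not_nonempty_iff] at h
    have := measure_univ (μ := μ)
    simp [Set.univ_eq_empty_iff.2 h] at this
  have hsup : (⨆ s, ‖πp s - πβ s‖) ≤ B₀ := ciSup_le hpβ
  have htv : ((ξ.totalVariation) Set.univ).toReal ≤ C * L_P * B₀ := by
    refine hTV.trans ?_
    have h0 : 0 ≤ C * L_P := by positivity
    exact mul_le_mul_of_nonneg_left hsup h0
  -- combine
  have hpnn : 0 ≤ (p Set.univ).toReal := ENNReal.toReal_nonneg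
  have hnnn : 0 ≤ (n Set.univ).toReal := ENNReal.toReal_nonneg
  have hLB : 0 ≤ L_Q * (B₀ + cinf) := by positivity
  have hmain : ∫ s, f s ∂ν ≥ ΔQ - L_Q * (B₀ + cinf) * (C * L_P * B₀) := by
    have habs : |∫ s, f s ∂p - ∫ s, f s ∂n| ≤
        L_Q * (B₀ + cinf) * ((ξ.totalVariation) Set.univ).toReal := by
      rw [htvr]
      calc |∫ s, f s ∂p - ∫ s, f s ∂n| ≤ |∫ s, f s ∂p| + |∫ s, f s ∂n| := abs_sub _ _
        _ ≤ _ := by linarith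
    have h2 : L_Q * (B₀ + cinf) * ((ξ.totalVariation) Set.univ).toReal ≤
        L_Q * (B₀ + cinf) * (C * L_P * B₀) := by
      exact mul_le_mul_of_nonneg_left htv hLB
    have h3 := abs_le.mp habs
    rw [hΔQ]
    linarith
  refine le_trans ?_ hmain
  have hexp : L_Q * (B₀ + cinf) * (C * L_P * B₀) ≤
      C * L_P * L_Q * (3 * cinf ^ 2 + 3 * cinf * B₀ + Δinf) := by
    have h1 : L_Q * (B₀ + cinf) * (C * L_P * B₀) = C * L_P * L_Q * (B₀ ^ 2 + cinf * B₀) := by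
      ring
    rw [h1]
    have h2 : B₀ ^ 2 + cinf * B₀ ≤ 3 * cinf ^ 2 + 3 * cinf * B₀ + Δinf := by nlinarith
    have h0 : 0 ≤ C * L_P * L_Q := by positivity
    exact mul_le_mul_of_nonneg_left h2 h0
  linarith
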